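/- Let T be a rank-valid binary tree of rank r with total leaf weight W. Then every leaf of T of weight w lies at depth exactly r − ⌊log₂ w⌋ in T, and consequently at depth at most ⌊log₂ W⌋ − ⌊log₂ w⌋; in particular, T is a perfectly biased binary tree: each leaf of weight w has depth at most log₂(W / w) + 1. -/

import Mathlib

/-- A finite binary tree whose leaves carry weights. -/
inductive BTree where
  | leaf (w : ℕ) : BTree
  | node (l r : BTree) : BTree

/-- The total leaf weight of a tree. -/
def BTree.weight : BTree → ℕ
  | .leaf w => w
  | .node l r => l.weight + r.weight

/-- A tree is *rank-valid of rank `r`* if it is a leaf of (positive) weight `w` with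
`r = ⌊log₂ w⌋`, or it is a node whose two subtrees are both rank-valid of rank `r − 1`. -/
inductive RankValid : BTree → ℕ → Prop
  | leaf (w : ℕ) (hw : 1 ≤ w) : RankValid (.leaf w) (Nat.log 2 w)
  | node (l r : BTree) (k : ℕ) : RankValid l k → RankValid r k →
      RankValid (.node l r) (k + 1)

/-- `LeafAt t w d` holds if `t` has a leaf of weight `w` at depth `d`. -/
inductive LeafAt : BTree → ℕ → ℕ → Prop
  | here (w : ℕ) : LeafAt (.leaf w) w 0
  | left {l r : BTree} {w d : ℕ} : LeafAt l w d → LeafAt (.node l r) w (d + 1)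
  | right {l r : BTree} {w d : ℕ} : LeafAt r w d → LeafAt (.node l r) w (d + 1)

/-- Let `T` be a rank-valid binary tree of rank `r` with total leaf weight `W`. Then
every leaf of `T` of weight `w` lies at depth exactly `r − ⌊log₂ w⌋` in `T`, and
consequently at depth at most `⌊log₂ W⌋ − ⌊log₂ w⌋`; in particular, `T` is a perfectly
biased binary tree: each leaf of weight `w` has depth at most `log₂(W / w) + 1`. -/
lemma aux_leaf (t : BTree) (r : ℕ) (h : RankValid t r) (w d : ℕ)
    (hleaf : LeafAt t w d) : 1 ≤ w ∧ Nat.log 2 w + d = r := by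
  induction hleaf generalizing r with
  | here w => cases h with | leaf _ hw => exact ⟨hw, rfl⟩
  | left _ ih =>
    cases h with | node _ _ k hl hr =>
      obtain ⟨h1, h2⟩ := ih k hl; exact ⟨h1, by omega⟩
  | right _ ih =>
    cases h with | node _ _ k hl hr =>
      obtain ⟨h1, h2⟩ := ih k hr; exact ⟨h1, by omega⟩

lemma aux_weight (t : BTree) (r : ℕ) (h : RankValid t r) : 2 ^ r ≤ t.weight := by
  induction h with
  | leaf w hw => exact Nat.pow_log_le_self 2 (by omega)
  | node l r k hl hr ihl ihr =>
    simp only [BTree.weight]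
    calc 2 ^ (k+1) = 2^k + 2^k := by ring
    _ ≤ l.weight + r.weight := Nat.add_le_add ihl ihr


theorem depth_of_rankValid (t : BTree) (r : ℕ) (h : RankValid t r)
    (w d : ℕ) (hleaf : LeafAt t w d) :
    d = r - Nat.log 2 w ∧
    d ≤ Nat.log 2 t.weight - Nat.log 2 w ∧
    (d : ℝ) ≤ Real.logb 2 ((t.weight : ℝ) / (w : ℝ)) + 1 := by
  obtain ⟨hw1, hsum⟩ := aux_leaf t r h w d hleaf
  have hW : 2 ^ r ≤ t.weight := aux_weight t r h
  have hrW : r ≤ Nat.log 2 t.weight := by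
    have := Nat.log_mono_right (b := 2) hW
    simpa [Nat.log_pow] using this
  refine ⟨by omega, by omega, ?_⟩
  have hWpos : 0 < t.weight := lt_of_lt_of_le (Nat.two_pow_pos r) hW
  have h1 : (Nat.log 2 t.weight : ℝ) ≤ Real.logb 2 (t.weight : ℝ) :=
    Real.natLog_le_logb _ _
  have h2 : Real.logb 2 (w : ℝ) < (Nat.log 2 w : ℝ) + 1 := by
    have hlt : (w : ℝ) < 2 ^ (Nat.log 2 w + 1) := by
      exact_mod_cast Nat.lt_pow_succ_log_self (by norm_num) w
    calc Real.logb 2 (w : ℝ) < Real.logb 2 ((2:ℝ) ^ (Nat.log 2 w + 1)) := by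
          apply Real.logb_lt_logb (by norm_num) (by exact_mod_cast hw1) hlt
      _ = (Nat.log 2 w : ℝ) + 1 := by
          rw [Real.logb_pow]; simp [Real.logb_self_eq_one]
  have hdiv : Real.logb 2 ((t.weight : ℝ) / (w : ℝ)) =
      Real.logb 2 (t.weight : ℝ) - Real.logb 2 (w : ℝ) := by
    apply Real.logb_div (by exact_mod_cast hWpos.ne') (by exact_mod_cast hw1.trans_lt' one_pos |>.ne')
  rw [hdiv]
  have hd : (d : ℝ) + (Nat.log 2 w : ℝ) ≤ (Nat.log 2 t.weight : ℝ) := by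
    exact_mod_cast (by omega : d + Nat.log 2 w ≤ Nat.log 2 t.weight)
  linarith
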